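/- Let e ∈ ℂ and x ∈ ℝ with x > 1, x ≠ 1, satisfying x(1 - |e|²) = e² + |e|² + ē² and |e|² = x²/(9(x-1)). Then |e - ē|² = x(x-3)²/(9(x-1)). -/

import Mathlib

theorem stmt_5 (e : ℂ) (x : ℝ) (hx : 1 < x)
    (h1 : (x : ℂ) * (1 - ((‖e‖ : ℂ)) ^ 2)
        = e ^ 2 + ((‖e‖ : ℂ)) ^ 2 + (starRingEnd ℂ e) ^ 2)
    (h2 : ‖e‖ ^ 2 = x ^ 2 / (9 * (x - 1))) :
    ‖e - starRingEnd ℂ e‖ ^ 2 = x * (x - 3) ^ 2 / (9 * (x - 1)) := by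
  have hre := congrArg Complex.re h1
  have habs : ‖e‖ ^ 2 = e.re ^ 2 + e.im ^ 2 := by
    rw [Complex.sq_norm, Complex.normSq_apply]; ring
  simp [Complex.mul_re, Complex.sub_re, Complex.sub_im, 
    Complex.mul_im, Complex.ofReal_re, Complex.ofReal_im, pow_two] at hre
  rw [Complex.sq_norm, Complex.normSq_apply]
  simp only [Complex.sub_re, Complex.sub_im, Complex.conj_re, Complex.conj_im]
  rw [habs] at h2
  have h9 : 9 * (x - 1) ≠ 0 := by nlinarith
  field_simp at h2 ⊢
  rw [eq_div_iff (by linarith : x - 1 ≠ 0)]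
  rw [eq_div_iff (by linarith : x - 1 ≠ 0)] at h2
  linear_combination 9*(x-1)*hre + 9*(x-1)*(x+1)*habs + (3+x)*h2
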